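/- arXiv:2506.01155 — 2 statements merged into one kernel-verified Lean document; each statement's English description precedes it below -/
import Mathlib

section
/- Fix d ≤ n/2 and t, δ > 0. Define Λ_{t,δ} := B_{n−d}(0,t) ∩ (δ·ℤ^{n−d}), where B_{n−d}(0,t) is the Euclidean ball of radius t centered at 0 in ℝ^{n−d}. Then with N = ⌈t/(δ√n)⌉ there exists a family F of (N,d,6)-boxes with |F| ≤ 2^{10n} such that Λ_{t,δ} ⊆ ∪_{B∈F} δ·B. -/
open MeasureTheory ProbabilityTheory Matrix Finset

noncomputable section

/-- Euclidean space `ℝ^n`. -/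
abbrev ESp (n : ℕ) : Type := EuclideanSpace ℝ (Fin n)

/-- View a plain vector as an element of Euclidean space. -/
def toE {n : ℕ} (x : Fin n → ℝ) : ESp n := WithLp.toLp 2 x

/-- An `(N, d, κ)`-box: a product `B_{d+1} × ⋯ × B_n ⊆ ℤ^{n-d}` (here indexed
by `Fin (n-d)`) with `|Bᵢ| ≥ N` for every `i` and `|B| ≤ (κN)^{n-d}`. -/
def IsBox {m : ℕ} (N : ℕ) (κ : ℝ) (Bx : Fin m → Finset ℤ) : Prop :=
  (∀ i, N ≤ (Bx i).card) ∧ (∏ i, ((Bx i).card : ℝ)) ≤ (κ * (N : ℝ)) ^ m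


def sbox (N k : ℕ) (s : Bool) : Finset ℤ :=
  if k = 0 then (if s then Finset.Icc 0 ((N : ℤ) - 1) else Finset.Icc (1 - (N : ℤ)) 0)
  else if s then Finset.Icc ((N : ℤ) * 2 ^ (k - 1)) ((N : ℤ) * 2 ^ k)
  else Finset.Icc (-((N : ℤ) * 2 ^ k)) (-((N : ℤ) * 2 ^ (k - 1)))

lemma sbox_card (N k : ℕ) (s : Bool) :
    (sbox N k s).card = if k = 0 then N else N * 2 ^ (k - 1) + 1 := by
  rcases k with _ | j
  · cases s <;> simp [sbox, Int.card_Icc]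
  · have h2 : ((N : ℤ) * 2 ^ (j + 1) + 1 - (N : ℤ) * 2 ^ j) = ((N * 2 ^ j + 1 : ℕ) : ℤ) := by
      push_cast; ring
    have h3 : (-((N:ℤ) * 2 ^ j) + 1 + (N:ℤ) * 2 ^ (j + 1)) = ((N * 2 ^ j + 1 : ℕ) : ℤ) := by
      push_cast; ring
    cases s <;> simp [sbox, Int.card_Icc]
    · rw [h3, Int.toNat_natCast]
    · rw [h2, Int.toNat_natCast]

lemma le_four_pow (k : ℕ) (hk : 1 ≤ k) : k ≤ 4 ^ (k - 1) := by
  induction k with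
  | zero => omega
  | succ j ih =>
    rcases Nat.eq_or_lt_of_le hk with h | h
    · simp [← h]
    · have hj : 1 ≤ j := by omega
      have h1 := ih hj
      have h4 : 4 ^ (j + 1 - 1) = 4 ^ (j - 1) * 4 := by
        rw [← pow_succ]; congr 1; omega
      omega

lemma dyadic_bounds (N a : ℕ) (hN : 1 ≤ N) (ha : N ≤ a) :
    N * 2 ^ Nat.log 2 (a / N) ≤ a ∧ a < N * 2 ^ (Nat.log 2 (a / N) + 1) := by
  have hq : 1 ≤ a / N := (Nat.one_le_div_iff hN).mpr ha
  constructor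
  · have h1 : 2 ^ Nat.log 2 (a / N) ≤ a / N := Nat.pow_log_le_self 2 (by omega)
    calc N * 2 ^ Nat.log 2 (a / N) ≤ N * (a / N) := Nat.mul_le_mul_left _ h1
      _ ≤ a := Nat.mul_div_le a N
  · have h2 : a / N < 2 ^ (Nat.log 2 (a / N) + 1) := Nat.lt_pow_succ_log_self (by norm_num) _
    have hd : N * (a / N + 1) = N * (a / N) + N := by ring
    have hmod := Nat.div_add_mod a N
    have hmlt : a % N < N := Nat.mod_lt _ (by omega)
    calc a < N * (a / N + 1) := by omega
      _ ≤ N * 2 ^ (Nat.log 2 (a / N) + 1) := Nat.mul_le_mul_left _ (by omega)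

lemma sbox_mem (N : ℕ) (hN : 1 ≤ N) (z : ℤ) :
    z ∈ sbox N (if z.natAbs < N then 0 else Nat.log 2 (z.natAbs / N) + 1) (decide (0 ≤ z)) := by
  by_cases hlt : z.natAbs < N
  · rw [if_pos hlt]
    by_cases hz : 0 ≤ z <;> simp [sbox, hz] <;> omega
  · rw [if_neg hlt]
    have ha : N ≤ z.natAbs := by omega
    obtain ⟨hlo, hhi⟩ := dyadic_bounds N z.natAbs hN ha
    set L := Nat.log 2 (z.natAbs / N) with hL
    have hlo' : (N : ℤ) * 2 ^ L ≤ (z.natAbs : ℤ) := by exact_mod_cast hlo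
    have hhi' : (z.natAbs : ℤ) ≤ (N : ℤ) * 2 ^ (L + 1) := by exact_mod_cast hhi.le
    by_cases hz : 0 ≤ z <;> simp [sbox, hz] <;> omega

lemma simplex_count (m n : ℕ) :
    ((Finset.univ : Finset (Fin m → Fin (n + 1))).filter
        (fun k => ∑ i, (k i : ℕ) ≤ n)).card ≤ 2 ^ (n + m) := by
  classical
  set T := ((Finset.univ : Finset (Fin m → Fin (n + 1))).filter
        (fun k => ∑ i, (k i : ℕ) ≤ n)) with hT
  -- multiset encoding
  set msum : (Fin m → Fin (n + 1)) → Multiset (Fin (m + 1)) :=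
    fun k => (∑ i : Fin m, (k i : ℕ) • ({(i.castSucc : Fin (m+1))} : Multiset (Fin (m+1))))
      + (n - ∑ i, (k i : ℕ)) • ({Fin.last m} : Multiset (Fin (m+1))) with hmsum
  have hcount : ∀ k (i : Fin m), (msum k).count i.castSucc = (k i : ℕ) := by
    intro k i
    rw [hmsum]
    simp only [Multiset.count_add, Multiset.count_nsmul, Multiset.count_singleton]
    rw [Multiset.count_sum']
    have hlast : (i.castSucc = Fin.last m) = False := by
      simp [Fin.ext_iff]; omega
    simp only [Multiset.count_nsmul, Multiset.count_singleton, hlast, if_false, mul_zero, add_zero]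
    rw [Finset.sum_eq_single i]
    · simp
    · intro b _ hb
      have : (i.castSucc = b.castSucc) = False := by
        simp [Fin.castSucc_inj]; exact fun h => hb h.symm
      simp [this]
    · simp
  have hcard : ∀ k ∈ T, Multiset.card (msum k) = n := by
    intro k hk
    rw [Finset.mem_filter] at hk
    rw [hmsum]
    simp only [Multiset.card_add, Multiset.card_nsmul, Multiset.card_singleton, mul_one]
    rw [Multiset.card_sum]
    simp only [Multiset.card_nsmul, Multiset.card_singleton, mul_one]
    omega
  have hinj : ∀ k ∈ T, ∀ k' ∈ T, msum k = msum k' → k = k' := by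
    intro k _ k' _ h
    funext i
    have := hcount k i
    rw [h, hcount] at this
    exact Fin.val_injective this.symm
  -- inject into Sym (Fin (m+1)) n
  have hle : T.card ≤ (Finset.univ : Finset (Sym (Fin (m + 1)) n)).card := by
    refine Finset.card_le_card_of_injOn
      (fun k => if h : k ∈ T then (⟨msum k, hcard k h⟩ : Sym (Fin (m+1)) n)
        else Sym.replicate n (Fin.last m)) (fun k _ => Finset.mem_univ _) ?_
    · intro k hk k' hk' h
      simp only [Finset.mem_coe] at hk hk'
      have e : ∀ x (hx : x ∈ T), (if h : x ∈ T then (⟨msum x, hcard x h⟩ : Sym (Fin (m+1)) n)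
          else Sym.replicate n (Fin.last m)) = ⟨msum x, hcard x hx⟩ := fun x hx => dif_pos hx
      dsimp only at h
      have h2 := (e k hk).symm.trans (h.trans (e k' hk'))
      exact hinj k hk k' hk' (congrArg Subtype.val h2)
  calc T.card ≤ Fintype.card (Sym (Fin (m + 1)) n) := by
        rw [← Finset.card_univ]; exact hle
    _ = (m + 1 + n - 1).choose n := by
        rw [Sym.card_sym_eq_choose]; simp
    _ ≤ 2 ^ (n + m) := by
        have h1 : m + 1 + n - 1 = n + m := by omega
        rw [h1]
        have := Nat.sum_range_choose (n + m)
        calc (n + m).choose n ≤ ∑ j ∈ Finset.range (n + m + 1), (n + m).choose j :=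
              Finset.single_le_sum (fun j _ => Nat.zero_le _)
                (Finset.mem_range.mpr (by omega))
          _ = 2 ^ (n + m) := Nat.sum_range_choose _

/-- **Lemma 5.6.** Covering of `Λ_{t,δ} = B_{n-d}(0,t) ∩ δℤ^{n-d}` by
`(N, d, 6)`-boxes with `N = ⌈t/(δ√n)⌉`, using a family of at most `2^{10n}`
boxes. -/
theorem box_covering (n d : ℕ) (hd : d ≤ n / 2) (t δ : ℝ)
    (ht : 0 < t) (hδ : 0 < δ) :
    ∃ F : Finset (Fin (n - d) → Finset ℤ),
      (∀ Bx ∈ F, IsBox (Nat.ceil (t / (δ * Real.sqrt n))) 6 Bx) ∧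
      (F.card : ℝ) ≤ 2 ^ (10 * n) ∧
      ∀ v : ESp (n - d), ‖v‖ ≤ t → (∀ i, ∃ z : ℤ, v i = δ * (z : ℝ)) →
        ∃ Bx ∈ F, ∀ i, ∃ z ∈ Bx i, v i = δ * (z : ℝ) := by
  classical
  rcases Nat.eq_zero_or_pos n with hn0 | hn
  · subst hn0
    have hd0 : d = 0 := by omega
    subst hd0
    refine ⟨{fun _ => (∅ : Finset ℤ)}, ?_, ?_, ?_⟩
    · intro Bx _
      exact ⟨fun i => i.elim0, by simp⟩
    · simp
    · intro v _ _
      exact ⟨_, Finset.mem_singleton_self _, fun i => i.elim0⟩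
  set N := Nat.ceil (t / (δ * Real.sqrt n)) with hNdef
  set m := n - d with hmdef
  have hnR : (0 : ℝ) < (n : ℝ) := by exact_mod_cast hn
  have hsq : (0 : ℝ) < Real.sqrt n := Real.sqrt_pos.mpr hnR
  have hδs : (0 : ℝ) < δ * Real.sqrt n := by positivity
  have hN1 : 1 ≤ N := Nat.ceil_pos.mpr (div_pos ht hδs)
  have hmn : m ≤ n := Nat.sub_le _ _
  have hnm : n ≤ 2 * m := by omega
  set S : Finset ((Fin m → Fin (n + 1)) × (Fin m → Bool)) :=
    ((Finset.univ : Finset (Fin m → Fin (n + 1))).filter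
      (fun k => ∑ i, (k i : ℕ) ≤ n)) ×ˢ Finset.univ with hS
  set F : Finset (Fin m → Finset ℤ) :=
    S.image (fun p => fun i => sbox N (p.1 i) (p.2 i)) with hF
  refine ⟨F, ?_, ?_, ?_⟩
  · -- each member is a box
    intro Bx hBx
    rw [hF, Finset.mem_image] at hBx
    obtain ⟨p, hp, rfl⟩ := hBx
    have hpk : ∑ i, ((p.1 i : ℕ)) ≤ n := by
      rw [hS, Finset.mem_product, Finset.mem_filter] at hp
      exact hp.1.2
    constructor
    · intro i
      rw [sbox_card]
      split
      · exact le_refl N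
      · have h1 : 1 ≤ 2 ^ ((p.1 i : ℕ) - 1) := Nat.one_le_two_pow
        nlinarith
    · have hcardle : ∀ i : Fin m, (sbox N (p.1 i) (p.2 i)).card ≤ N * 2 ^ (p.1 i : ℕ) := by
        intro i
        rw [sbox_card]
        split
        · next h => rw [h]; simp
        · next h =>
          obtain ⟨j, hj⟩ : ∃ j, (p.1 i : ℕ) = j + 1 := ⟨(p.1 i : ℕ) - 1, by omega⟩
          rw [hj]
          simp only [Nat.add_sub_cancel, pow_succ]
          have h1 : 0 < N * 2 ^ j := by positivity
          nlinarith
      have hprodnat : (∏ i, (sbox N (p.1 i) (p.2 i)).card) ≤ N ^ m * 2 ^ (2 * m) := by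
        calc (∏ i, (sbox N (p.1 i) (p.2 i)).card)
            ≤ ∏ i, N * 2 ^ (p.1 i : ℕ) :=
              Finset.prod_le_prod' (fun i _ => hcardle i)
          _ = N ^ m * 2 ^ (∑ i, (p.1 i : ℕ)) := by
              rw [Finset.prod_mul_distrib, Finset.prod_const, Finset.card_univ,
                Fintype.card_fin, Finset.prod_pow_eq_pow_sum]
          _ ≤ N ^ m * 2 ^ (2 * m) :=
              Nat.mul_le_mul_left _ (Nat.pow_le_pow_right (by norm_num) (hpk.trans hnm))
      calc (∏ i, ((sbox N (p.1 i) (p.2 i)).card : ℝ))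
          = ((∏ i, (sbox N (p.1 i) (p.2 i)).card : ℕ) : ℝ) := by push_cast; rfl
        _ ≤ ((N ^ m * 2 ^ (2 * m) : ℕ) : ℝ) := by exact_mod_cast hprodnat
        _ = ((4 : ℝ) * N) ^ m := by
            push_cast
            rw [pow_mul]
            norm_num
            rw [← mul_pow]
            ring_nf
        _ ≤ ((6 : ℝ) * N) ^ m := by
            have h0 : (0:ℝ) ≤ (N:ℝ) := Nat.cast_nonneg _
            exact pow_le_pow_left₀ (by positivity) (by nlinarith) m
  · -- cardinality bound
    have h1 : F.card ≤ S.card := Finset.card_image_le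
    have h2 : S.card ≤ 2 ^ (n + m) * 2 ^ m := by
      rw [hS, Finset.card_product, Finset.card_univ]
      have := simplex_count m n
      have hfun : Fintype.card (Fin m → Bool) = 2 ^ m := by
        rw [Fintype.card_fun]; simp
      rw [hfun]
      exact Nat.mul_le_mul_right _ this
    have h3 : F.card ≤ 2 ^ (10 * n) := by
      calc F.card ≤ 2 ^ (n + m) * 2 ^ m := h1.trans h2
        _ = 2 ^ (n + m + m) := by rw [← pow_add]
        _ ≤ 2 ^ (10 * n) := Nat.pow_le_pow_right (by norm_num) (by omega)
    calc (F.card : ℝ) ≤ ((2 ^ (10 * n) : ℕ) : ℝ) := by exact_mod_cast h3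
      _ = 2 ^ (10 * n) := by push_cast; ring
  · -- covering
    intro v hv hvz
    choose z hz using hvz
    set k : Fin m → ℕ := fun i => if (z i).natAbs < N then 0
      else Nat.log 2 ((z i).natAbs / N) + 1 with hk
    set s : Fin m → Bool := fun i => decide (0 ≤ z i) with hs
    -- the level-sum bound
    have hWstep : ∀ i, (δ * N) ^ 2 * (if k i = 0 then (0:ℝ) else 4 ^ (k i - 1)) ≤ (v i) ^ 2 := by
      intro i
      split
      · next h => nlinarith [sq_nonneg (v i)]
      · next h =>
        have hlt : ¬ ((z i).natAbs < N) := by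
          intro hc
          exact h (by simp only [hk]; rw [if_pos hc])
        have ha : N ≤ (z i).natAbs := by omega
        obtain ⟨hlo, _⟩ := dyadic_bounds N (z i).natAbs hN1 ha
        have hki : k i - 1 = Nat.log 2 ((z i).natAbs / N) := by
          rw [hk]; simp only [if_neg hlt, Nat.add_sub_cancel]
        rw [hki]
        have hloR : (N : ℝ) * 2 ^ Nat.log 2 ((z i).natAbs / N) ≤ ((z i).natAbs : ℝ) := by
          exact_mod_cast hlo
        have habs : (((z i).natAbs : ℝ)) ^ 2 = ((z i : ℝ)) ^ 2 := by
          rw [Nat.cast_natAbs, Int.cast_abs, sq_abs]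
        have hz2 : (v i) ^ 2 = δ ^ 2 * ((z i : ℝ)) ^ 2 := by rw [hz i]; ring
        have h4 : ((4:ℝ)) ^ (Nat.log 2 ((z i).natAbs / N)) =
            ((2:ℝ) ^ (Nat.log 2 ((z i).natAbs / N))) ^ 2 := by
          rw [show (4:ℝ) = 2 ^ 2 by norm_num, ← pow_mul, ← pow_mul, Nat.mul_comm]
        have hnn : (0:ℝ) ≤ (N : ℝ) * 2 ^ Nat.log 2 ((z i).natAbs / N) := by positivity
        rw [hz2, h4]
        have hsq2 : ((N : ℝ) * 2 ^ Nat.log 2 ((z i).natAbs / N)) ^ 2 ≤ ((z i : ℝ)) ^ 2 := by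
          rw [← habs]
          exact pow_le_pow_left₀ hnn hloR 2
        have hexp : (δ * N) ^ 2 * ((2:ℝ) ^ Nat.log 2 ((z i).natAbs / N)) ^ 2
            = δ ^ 2 * ((N : ℝ) * 2 ^ Nat.log 2 ((z i).natAbs / N)) ^ 2 := by ring
        rw [hexp]
        have hδ2 : (0:ℝ) ≤ δ ^ 2 := sq_nonneg δ
        nlinarith
    have hnormsq : ∑ i, (v i) ^ 2 ≤ t ^ 2 := by
      have h1 : ‖v‖ ^ 2 = ∑ i, (v i) ^ 2 := by
        rw [EuclideanSpace.norm_eq]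
        rw [Real.sq_sqrt (by positivity)]
        congr 1
        funext i
        rw [Real.norm_eq_abs, sq_abs]
      rw [← h1]
      have := norm_nonneg v
      nlinarith
    have ht2 : t ^ 2 ≤ δ ^ 2 * n * N ^ 2 := by
      have h1 : t / (δ * Real.sqrt n) ≤ (N : ℝ) := Nat.le_ceil _
      have h2 : t ≤ (N : ℝ) * (δ * Real.sqrt n) := (div_le_iff₀ hδs).mp h1
      have h3 : Real.sqrt n ^ 2 = (n : ℝ) := Real.sq_sqrt (le_of_lt hnR)
      have h4 : t ^ 2 ≤ ((N : ℝ) * (δ * Real.sqrt n)) ^ 2 := pow_le_pow_left₀ ht.le h2 2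
      calc t ^ 2 ≤ ((N : ℝ) * (δ * Real.sqrt n)) ^ 2 := h4
        _ = δ ^ 2 * (Real.sqrt n ^ 2) * (N : ℝ) ^ 2 := by ring
        _ = δ ^ 2 * n * N ^ 2 := by rw [h3]
    have hsumW : ∑ i, (if k i = 0 then (0:ℝ) else 4 ^ (k i - 1)) ≤ (n : ℝ) := by
      have hs1 : (δ * N) ^ 2 * ∑ i, (if k i = 0 then (0:ℝ) else 4 ^ (k i - 1))
          ≤ ∑ i, (v i) ^ 2 := by
        rw [Finset.mul_sum]
        exact Finset.sum_le_sum (fun i _ => hWstep i)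
      have hpos : (0:ℝ) < (δ * N) ^ 2 := by
        have : (0:ℝ) < (N:ℝ) := by exact_mod_cast hN1
        positivity
      have hchain : (δ * N) ^ 2 * ∑ i, (if k i = 0 then (0:ℝ) else 4 ^ (k i - 1))
          ≤ (δ * N) ^ 2 * (n : ℝ) := by
        calc (δ * N) ^ 2 * ∑ i, (if k i = 0 then (0:ℝ) else 4 ^ (k i - 1))
            ≤ ∑ i, (v i) ^ 2 := hs1
          _ ≤ t ^ 2 := hnormsq
          _ ≤ δ ^ 2 * n * N ^ 2 := ht2
          _ = (δ * N) ^ 2 * (n : ℝ) := by ring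
      exact le_of_mul_le_mul_left hchain hpos
    have hsumk : ∑ i, k i ≤ n := by
      have hkW : ∀ i, (k i : ℝ) ≤ (if k i = 0 then (0:ℝ) else 4 ^ (k i - 1)) := by
        intro i
        split
        · next h => simp [h]
        · next h =>
          have := le_four_pow (k i) (by omega)
          calc (k i : ℝ) ≤ ((4 ^ (k i - 1) : ℕ) : ℝ) := by exact_mod_cast this
            _ = 4 ^ (k i - 1) := by push_cast; ring
      have : ((∑ i, k i : ℕ) : ℝ) ≤ (n : ℝ) := by
        push_cast
        calc ∑ i, (k i : ℝ) ≤ ∑ i, (if k i = 0 then (0:ℝ) else 4 ^ (k i - 1)) :=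
              Finset.sum_le_sum (fun i _ => hkW i)
          _ ≤ (n : ℝ) := hsumW
      exact_mod_cast this
    have hklt : ∀ i, k i < n + 1 := by
      intro i
      have : k i ≤ ∑ j, k j := Finset.single_le_sum (fun j _ => Nat.zero_le _) (Finset.mem_univ i)
      omega
    set p : (Fin m → Fin (n + 1)) × (Fin m → Bool) :=
      (fun i => (⟨k i, hklt i⟩ : Fin (n + 1)), s) with hp
    have hpS : p ∈ S := by
      rw [hS, Finset.mem_product, Finset.mem_filter]
      exact ⟨⟨Finset.mem_univ _, hsumk⟩, Finset.mem_univ _⟩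
    refine ⟨fun i => sbox N (k i) (s i), ?_, ?_⟩
    · rw [hF, Finset.mem_image]
      exact ⟨p, hpS, rfl⟩
    · intro i
      refine ⟨z i, ?_, hz i⟩
      have := sbox_mem N hN1 (z i)
      rw [hk, hs]
      exact this
end
end

section
/- For m ∈ ℕ let G_m be the adjacency matrix of the Erdős–Rényi graph G(m, 1/2), viewed as a real matrix. Then for every n ∈ ℕ and every integer k with 0 ≤ k ≤ n−1: P(Rank(G_n) = k) ≤ 2·P(Rank(G_{2n−k−1}) = 2n−k−2). -/
open MeasureTheory ProbabilityTheory Matrix Finset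

noncomputable section

/-- The Bernoulli(p) law on `ℝ` (mass `p` at `1`, mass `1-p` at `0`). -/
def bernoulliLaw (p : ℝ) : Measure ℝ :=
  ENNReal.ofReal p • Measure.dirac 1 + ENNReal.ofReal (1 - p) • Measure.dirac 0

/-- `G` is the adjacency matrix of an Erdős–Rényi graph `G(m,p)`:
a random symmetric matrix with zero diagonal whose entries above the
diagonal are i.i.d. Bernoulli(p). -/
def IsERMatrix {Ω : Type*} [MeasureSpace Ω] {m : ℕ} (p : ℝ)
    (G : Ω → Matrix (Fin m) (Fin m) ℝ) : Prop :=
  (∀ ω, (G ω).IsSymm) ∧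
  (∀ ω i, G ω i i = 0) ∧
  (∀ i j : Fin m, Measurable fun ω => G ω i j) ∧
  iIndepFun
    (fun q : {q : Fin m × Fin m // q.1 < q.2} => fun ω => G ω q.1.1 q.1.2) volume ∧
  ∀ q : {q : Fin m × Fin m // q.1 < q.2},
    Measure.map (fun ω => G ω q.1.1 q.1.2) volume = bernoulliLaw p

instance bernoulliLaw_finite (p : ℝ) : IsFiniteMeasure (bernoulliLaw p) := by
  constructor
  unfold bernoulliLaw
  simp only [Measure.add_apply, Measure.smul_apply, smul_eq_mul, MeasureTheory.measure_univ]
  simp [ENNReal.ofReal_lt_top, ENNReal.add_lt_top]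


namespace ERRank


/-- The span of the columns of a matrix. -/
def colSpan {a b : ℕ} (A : Matrix (Fin a) (Fin b) ℝ) : Submodule ℝ (Fin a → ℝ) :=
  Submodule.span ℝ (Set.range Aᵀ)

lemma rank_eq_colSpan {a b : ℕ} (A : Matrix (Fin a) (Fin b) ℝ) :
    A.rank = Module.finrank ℝ (colSpan A) := Matrix.rank_eq_finrank_span_cols A

section frk
variable {V : Type*} [AddCommGroup V] [Module ℝ V] [FiniteDimensional ℝ V]

lemma finrank_sup_singleton_le (p : Submodule ℝ V) (v : V) :
    Module.finrank ℝ ↥(p ⊔ Submodule.span ℝ {v}) ≤ Module.finrank ℝ p + 1 := by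
  have h := Submodule.finrank_sup_add_finrank_inf_eq p (Submodule.span ℝ {v})
  have h2 : Module.finrank ℝ (Submodule.span ℝ ({v} : Set V)) ≤ 1 := by
    rcases eq_or_ne v 0 with rfl | hv
    · rw [Submodule.span_zero_singleton]; simp
    · rw [finrank_span_singleton hv]
  omega

lemma finrank_sup_singleton_eq (p : Submodule ℝ V) (v : V) (hv : v ∉ p) :
    Module.finrank ℝ ↥(p ⊔ Submodule.span ℝ {v}) = Module.finrank ℝ p + 1 := by
  have hv0 : v ≠ 0 := fun h => hv (h ▸ p.zero_mem)
  have hinf : p ⊓ Submodule.span ℝ {v} = ⊥ := by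
    rw [eq_bot_iff]
    rintro x ⟨hxp, hxs⟩
    obtain ⟨c, rfl⟩ := Submodule.mem_span_singleton.mp hxs
    rcases eq_or_ne c 0 with rfl | hc
    · simp
    · exact absurd (by simpa [hc] using p.smul_mem c⁻¹ hxp) hv
  have h := Submodule.finrank_sup_add_finrank_inf_eq p (Submodule.span ℝ {v})
  rw [hinf, finrank_span_singleton hv0] at h
  simpa using h

lemma mem_iff_finrank_sup (p : Submodule ℝ V) (v : V) :
    v ∈ p ↔ Module.finrank ℝ ↥(p ⊔ Submodule.span ℝ {v}) = Module.finrank ℝ p := by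
  constructor
  · intro hv
    rw [sup_eq_left.mpr (Submodule.span_le.mpr (by simpa using hv))]
  · intro h
    by_contra hv
    rw [finrank_sup_singleton_eq p v hv] at h
    omega

end frk

section rk
variable {a b c : ℕ}

lemma rank_submatrix_id_right_le (A : Matrix (Fin a) (Fin b) ℝ) (g : Fin c → Fin b) :
    (A.submatrix id g).rank ≤ A.rank := by
  rw [rank_eq_colSpan, rank_eq_colSpan]
  apply Submodule.finrank_mono
  apply Submodule.span_mono
  rintro _ ⟨j, rfl⟩
  exact ⟨g j, by ext i; simp⟩

lemma rank_submatrix_id_left_le (A : Matrix (Fin a) (Fin b) ℝ) (f : Fin c → Fin a) :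
    (A.submatrix f id).rank ≤ A.rank := by
  have h1 : (A.submatrix f id) = (Aᵀ.submatrix id f)ᵀ := by ext i j; simp
  rw [h1, Matrix.rank_transpose]
  exact (rank_submatrix_id_right_le Aᵀ f).trans (Matrix.rank_transpose A).le

lemma rank_submatrix_le' (A : Matrix (Fin a) (Fin b) ℝ) (f : Fin c → Fin a) (g : Fin c → Fin b) :
    (A.submatrix f g).rank ≤ A.rank := by
  have h1 : A.submatrix f g = (A.submatrix f id).submatrix id g := rfl
  rw [h1]
  exact (rank_submatrix_id_right_le _ g).trans (rank_submatrix_id_left_le A f)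

lemma det_ne_zero_of_rank_eq {r : ℕ} (M : Matrix (Fin r) (Fin r) ℝ) (h : M.rank = r) :
    M.det ≠ 0 := by
  intro h0
  obtain ⟨v, hv, hMv⟩ := (Matrix.exists_mulVec_eq_zero_iff).mpr h0
  have hrn := LinearMap.finrank_range_add_finrank_ker M.mulVecLin
  have hdom : Module.finrank ℝ (Fin r → ℝ) = r := by
    simp [Module.finrank_fintype_fun_eq_card]
  rw [hdom] at hrn
  have hker0 : Module.finrank ℝ (LinearMap.ker M.mulVecLin) = 0 := by
    have : M.rank = Module.finrank ℝ (LinearMap.range M.mulVecLin) := rfl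
    omega
  rw [Submodule.finrank_eq_zero] at hker0
  have : v ∈ LinearMap.ker M.mulVecLin := by
    simpa [Matrix.mulVecLin] using hMv
  rw [hker0] at this
  exact hv this

lemma exists_submatrix_cols (A : Matrix (Fin a) (Fin b) ℝ) {r : ℕ} (h : r ≤ A.rank) :
    ∃ g : Fin r → Fin b, (A.submatrix id g).rank = r := by
  classical
  obtain ⟨s, hs_sub, hs_span, hs_ind⟩ := exists_linearIndependent ℝ (Set.range Aᵀ)
  have hsfin : s.Finite := (Set.finite_range Aᵀ).subset hs_sub
  haveI := hsfin.fintype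
  have hcard : s.toFinset.card = A.rank := by
    rw [rank_eq_colSpan, colSpan, ← hs_span]
    exact (finrank_span_set_eq_card hs_ind).symm
  obtain ⟨t, hts, htcard⟩ := Finset.exists_subset_card_eq (s := s.toFinset) (n := r) (by omega)
  have hlen : t.toList.length = r := by rw [Finset.length_toList, htcard]
  have hnd : t.toList.Nodup := Finset.nodup_toList t
  set u : Fin r → ↥s := fun i => ⟨t.toList.get (Fin.cast hlen.symm i), by
    have h1 : t.toList.get (Fin.cast hlen.symm i) ∈ t.toList :=
      t.toList.get_mem (Fin.cast hlen.symm i)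
    exact Set.mem_toFinset.mp (hts (Finset.mem_toList.mp h1))⟩ with hu
  have hu_inj : Function.Injective u := by
    intro i j hij
    have := List.nodup_iff_injective_get.mp hnd (Subtype.ext_iff.mp hij)
    simpa [Fin.ext_iff] using this
  have hv_ind : LinearIndependent ℝ fun i => (u i : Fin a → ℝ) := hs_ind.comp u hu_inj
  have hmem : ∀ i : Fin r, ∃ j, Aᵀ j = (u i : Fin a → ℝ) := fun i => hs_sub (u i).2
  choose g hg using hmem
  refine ⟨g, ?_⟩
  have hcols : (A.submatrix id g)ᵀ = fun i => (u i : Fin a → ℝ) := by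
    funext j; ext i
    have := congrFun (hg j) i
    simpa using this
  rw [rank_eq_colSpan, colSpan, hcols, finrank_span_eq_card hv_ind, Fintype.card_fin]

lemma rank_ge_iff_det (A : Matrix (Fin a) (Fin b) ℝ) (r : ℕ) :
    r ≤ A.rank ↔ ∃ (f : Fin r → Fin a) (g : Fin r → Fin b), (A.submatrix f g).det ≠ 0 := by
  constructor
  · intro h
    obtain ⟨g, hg⟩ := exists_submatrix_cols A h
    have h2 : r ≤ ((A.submatrix id g)ᵀ).rank := by
      rw [Matrix.rank_transpose]; exact hg.ge
    obtain ⟨f, hf⟩ := exists_submatrix_cols ((A.submatrix id g)ᵀ) h2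
    refine ⟨f, g, ?_⟩
    have heq : ((A.submatrix id g)ᵀ.submatrix id f) = (A.submatrix f g)ᵀ := by
      ext i j; simp
    rw [heq, Matrix.rank_transpose] at hf
    exact det_ne_zero_of_rank_eq _ hf
  · rintro ⟨f, g, hd⟩
    have hU : IsUnit (A.submatrix f g) :=
      (Matrix.isUnit_iff_isUnit_det _).mpr (isUnit_iff_ne_zero.mpr hd)
    have : (A.submatrix f g).rank = r := by
      rw [Matrix.rank_of_isUnit _ hU, Fintype.card_fin]
    exact this ▸ rank_submatrix_le' A f g

end rk

section ext

variable {m : ℕ} (W : Matrix (Fin (m + 1)) (Fin (m + 1)) ℝ)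

/-- Principal `m × m` block. -/
def subA : Matrix (Fin m) (Fin m) ℝ := W.submatrix Fin.castSucc Fin.castSucc

/-- Last column, above the diagonal. -/
def subv : Fin m → ℝ := fun i => W (Fin.castSucc i) (Fin.last m)

lemma colSpan_snoc {a : ℕ} (M : Matrix (Fin a) (Fin (m + 1)) ℝ) :
    colSpan M = colSpan (M.submatrix id Fin.castSucc) ⊔ Submodule.span ℝ {Mᵀ (Fin.last m)} := by
  unfold colSpan
  rw [← Submodule.span_union]
  congr 1
  ext y
  constructor
  · rintro ⟨j, rfl⟩
    rcases Fin.eq_castSucc_or_eq_last j with ⟨j', rfl⟩ | rfl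
    · exact Or.inl ⟨j', by ext i; simp⟩
    · exact Or.inr rfl
  · rintro (⟨j', rfl⟩ | h)
    · exact ⟨Fin.castSucc j', by ext i; simp⟩
    · exact ⟨Fin.last m, by rw [Set.mem_singleton_iff] at h; rw [h]⟩

lemma colSpan_R : colSpan (W.submatrix Fin.castSucc id) =
    colSpan (subA W) ⊔ Submodule.span ℝ {subv W} := by
  have h := colSpan_snoc (W.submatrix Fin.castSucc id)
  have h1 : (W.submatrix Fin.castSucc id).submatrix id Fin.castSucc = subA W := rfl
  have h2 : (W.submatrix Fin.castSucc id)ᵀ (Fin.last m) = subv W := by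
    ext i; simp [subv]
  rw [h1, h2] at h
  exact h

lemma mem_colSpan_iff_rank :
    subv W ∈ colSpan (subA W) ↔ (W.submatrix Fin.castSucc id).rank = (subA W).rank := by
  rw [rank_eq_colSpan, rank_eq_colSpan, colSpan_R]
  exact mem_iff_finrank_sup _ _

lemma rank_ext_eq (hW : W.IsSymm) (hv : subv W ∉ colSpan (subA W)) :
    W.rank = (subA W).rank + 2 := by
  have hS : W.submatrix id Fin.castSucc = (W.submatrix Fin.castSucc id)ᵀ := by
    ext i j
    simp [hW.apply]
  have hrankR : (W.submatrix Fin.castSucc id).rank = (subA W).rank + 1 := by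
    rw [rank_eq_colSpan, colSpan_R, finrank_sup_singleton_eq _ _ hv, ← rank_eq_colSpan]
  have hrankS : (W.submatrix id Fin.castSucc).rank = (subA W).rank + 1 := by
    rw [hS, Matrix.rank_transpose, hrankR]
  have hw_not : Wᵀ (Fin.last m) ∉ colSpan (W.submatrix id Fin.castSucc) := by
    intro hmemS
    apply hv
    set π : (Fin (m + 1) → ℝ) →ₗ[ℝ] (Fin m → ℝ) := LinearMap.funLeft ℝ ℝ Fin.castSucc with hπ
    have hmap : π (Wᵀ (Fin.last m)) ∈
        Submodule.map π (colSpan (W.submatrix id Fin.castSucc)) :=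
      Submodule.mem_map_of_mem hmemS
    erw [colSpan, Submodule.map_span, ← Set.range_comp] at hmap
    have hr : (π ∘ (W.submatrix id Fin.castSucc)ᵀ) = (subA W)ᵀ := by
      funext j; ext i
      simp [hπ, LinearMap.funLeft_apply, subA] <;> rfl
    have hvv : π (Wᵀ (Fin.last m)) = subv W := by
      ext i
      simp [hπ, LinearMap.funLeft_apply, subv, Matrix.transpose_apply]
    rw [hr, hvv] at hmap
    exact hmap
  rw [rank_eq_colSpan, colSpan_snoc W, finrank_sup_singleton_eq _ _ hw_not, ← rank_eq_colSpan,
    hrankS]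

end ext


section meas
variable {α : Type*} [MeasurableSpace α] {a b r : ℕ}

lemma measurable_det {r : ℕ} (f : α → Matrix (Fin r) (Fin r) ℝ)
    (hf : ∀ i j, Measurable fun x => f x i j) :
    Measurable fun x => (f x).det := by
  simp_rw [Matrix.det_apply']
  apply Finset.measurable_sum
  intro σ _
  apply Measurable.const_mul
  apply Finset.measurable_prod
  intro i _
  exact hf _ _

lemma measurableSet_rank_ge (f : α → Matrix (Fin a) (Fin b) ℝ)
    (hf : ∀ i j, Measurable fun x => f x i j) (r : ℕ) :
    MeasurableSet {x | r ≤ (f x).rank} := by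
  have h : {x | r ≤ (f x).rank} =
      ⋃ fg : (Fin r → Fin a) × (Fin r → Fin b),
        {x | ((f x).submatrix fg.1 fg.2).det ≠ 0} := by
    ext x
    simp only [Set.mem_setOf_eq, Set.mem_iUnion, rank_ge_iff_det, Prod.exists]
  rw [h]
  refine MeasurableSet.iUnion fun fg => ?_
  have := measurable_det (fun x => (f x).submatrix fg.1 fg.2) (fun i j => hf _ _)
  exact this (measurableSet_singleton 0) |>.compl

lemma measurable_rank (f : α → Matrix (Fin a) (Fin b) ℝ)
    (hf : ∀ i j, Measurable fun x => f x i j) :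
    Measurable fun x => (f x).rank := by
  apply measurable_to_countable'
  intro n
  have h : (fun x => (f x).rank) ⁻¹' {n} =
      {x | n ≤ (f x).rank} \ {x | n + 1 ≤ (f x).rank} := by
    ext x; simp only [Set.mem_preimage, Set.mem_singleton_iff, Set.mem_diff, Set.mem_setOf_eq]
    omega
  rw [h]
  exact (measurableSet_rank_ge f hf n).diff (measurableSet_rank_ge f hf (n + 1))

end meas

section counting
open scoped Classical
variable {m : ℕ}

def toR (bl : Fin m → Bool) : Fin m → ℝ := fun i => if bl i then 1 else 0

lemma toR_injective : Function.Injective (toR (m := m)) := by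
  intro b1 b2 h
  funext i
  have := congrFun h i
  simp only [toR] at this
  cases h1 : b1 i <;> cases h2 : b2 i <;> simp [h1, h2] at this ⊢ <;> norm_num at this

lemma card_bool_mem_le (V : Submodule ℝ (Fin m → ℝ)) :
    (Finset.univ.filter fun bl : Fin m → Bool => toR bl ∈ V).card ≤
      2 ^ Module.finrank ℝ V := by
  classical
  set φ : Fin m → Module.Dual ℝ V := fun i => (LinearMap.proj i).comp V.subtype with hφ
  obtain ⟨t, ht_sub, ht_span, ht_ind⟩ := exists_linearIndependent ℝ (Set.range φ)
  have htfin : t.Finite := (Set.finite_range φ).subset ht_sub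
  haveI := htfin.fintype
  have hkey : ∀ x : V, (∀ f ∈ t, f x = 0) → x = 0 := by
    intro x hx
    have hspan0 : ∀ f ∈ Submodule.span ℝ t, (f : Module.Dual ℝ V) x = 0 := by
      intro f hf
      induction hf using Submodule.span_induction with
      | mem f hf => exact hx f hf
      | zero => simp
      | add f g _ _ hf hg => simp [hf, hg]
      | smul c f _ hf => simp [hf]
    have hall : ∀ i, (x : Fin m → ℝ) i = 0 := by
      intro i
      have hmem : φ i ∈ Submodule.span ℝ t := by
        rw [ht_span]; exact Submodule.subset_span ⟨i, rfl⟩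
      exact hspan0 _ hmem
    exact Subtype.ext (funext hall)
  have hcard_t : t.toFinset.card ≤ Module.finrank ℝ V := by
    have h1 : Module.finrank ℝ (Submodule.span ℝ t) = t.toFinset.card :=
      finrank_span_set_eq_card ht_ind
    have h2 : Module.finrank ℝ (Submodule.span ℝ t) ≤
        Module.finrank ℝ (Module.Dual ℝ V) := Submodule.finrank_le _
    rw [Subspace.dual_finrank_eq] at h2
    omega
  choose idx hidx using fun f : ↥t => ht_sub f.2
  have hinj : Set.InjOn (fun bl : Fin m → Bool => fun f : ↥t => bl (idx f))
      ↑(Finset.univ.filter fun bl : Fin m → Bool => toR bl ∈ V) := by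
    intro b1 hb1 b2 hb2 hΨ
    simp only [Finset.coe_filter, Set.mem_setOf_eq, Finset.mem_univ, true_and] at hb1 hb2
    set x : V := ⟨toR b1, hb1⟩ - ⟨toR b2, hb2⟩ with hx
    have hzero : ∀ f ∈ t, f x = 0 := by
      intro f hf
      have h1 : φ (idx ⟨f, hf⟩) = f := hidx ⟨f, hf⟩
      rw [← h1]
      have hb : b1 (idx ⟨f, hf⟩) = b2 (idx ⟨f, hf⟩) := congrFun hΨ ⟨f, hf⟩
      simp only [hφ, hx, LinearMap.comp_apply, map_sub]
      simp only [LinearMap.proj_apply, Submodule.coe_subtype, toR, hb]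
      ring
    have := hkey x hzero
    rw [hx, sub_eq_zero, Subtype.mk_eq_mk] at this
    exact toR_injective this
  have hcard := Finset.card_le_card_of_injOn _ (fun bl _ => Finset.mem_univ _) hinj
  calc (Finset.univ.filter fun bl : Fin m → Bool => toR bl ∈ V).card
      ≤ (Finset.univ : Finset (↥t → Bool)).card := hcard
    _ = 2 ^ t.toFinset.card := by
        rw [Finset.card_univ, Fintype.card_fun, Fintype.card_bool, Set.toFinset_card]
    _ ≤ 2 ^ Module.finrank ℝ V := Nat.pow_le_pow_right (by norm_num) hcard_t

end counting

section bern
open scoped Classical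

lemma bern_eq : bernoulliLaw (1 / 2) =
    (2⁻¹ : ENNReal) • Measure.dirac (1 : ℝ) + (2⁻¹ : ENNReal) • Measure.dirac (0 : ℝ) := by
  unfold bernoulliLaw
  norm_num
  rw [ENNReal.ofReal_div_of_pos (by norm_num)]
  norm_num [ENNReal.ofReal_ofNat]

instance : IsProbabilityMeasure (bernoulliLaw (1 / 2)) := by
  constructor
  rw [bern_eq]
  simp [ENNReal.inv_two_add_inv_two]

lemma bern_apply {s : Set ℝ} (hs : MeasurableSet s) :
    bernoulliLaw (1 / 2) s =
      2⁻¹ * (((Finset.univ.filter fun y : Bool => (if y then (1:ℝ) else 0) ∈ s)).card :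
        ENNReal) := by
  rw [bern_eq]
  simp only [Measure.add_apply, Measure.smul_apply, smul_eq_mul,
    Measure.dirac_apply' _ hs]
  rw [show (Finset.univ : Finset Bool) = {true, false} from rfl]
  rw [Finset.filter_insert, Finset.filter_singleton]
  by_cases h1 : (1:ℝ) ∈ s <;> by_cases h0 : (0:ℝ) ∈ s <;>
    simp [Set.indicator_apply, h1, h0, mul_add, mul_two]

lemma pi_bern_eq_map (m : ℕ) :
    (Measure.pi fun _ : Fin m => bernoulliLaw (1 / 2)) =
      (((2 : ENNReal) ^ m)⁻¹ • (Measure.count : Measure (Fin m → Bool))).map toR := by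
  refine (Measure.pi_eq fun s hs => ?_)
  rw [Measure.map_apply .of_discrete (MeasurableSet.univ_pi hs)]
  rw [Measure.smul_apply, smul_eq_mul]
  have hfin : (toR ⁻¹' Set.pi Set.univ s).Finite := Set.toFinite _
  rw [Measure.count_apply_finite _ hfin]
  have hset : hfin.toFinset =
      Fintype.piFinset fun i => Finset.univ.filter fun y : Bool => (if y then (1:ℝ) else 0) ∈ s i := by
    ext bl
    simp [toR, Set.mem_pi, Fintype.mem_piFinset]
  rw [hset, Fintype.card_piFinset]
  push_cast
  rw [Finset.prod_congr rfl fun i _ => bern_apply (hs i)]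
  rw [Finset.prod_mul_distrib, Finset.prod_const, Finset.card_univ, Fintype.card_fin,
    ← ENNReal.inv_pow]

lemma pi_bern_subspace_le (m : ℕ) (V : Submodule ℝ (Fin m → ℝ)) :
    (Measure.pi fun _ : Fin m => bernoulliLaw (1 / 2)) (V : Set (Fin m → ℝ)) ≤
      2 ^ Module.finrank ℝ V * ((2 : ENNReal) ^ m)⁻¹ := by
  have hV : MeasurableSet (V : Set (Fin m → ℝ)) :=
    (Submodule.closed_of_finiteDimensional V).measurableSet
  rw [pi_bern_eq_map, Measure.map_apply .of_discrete hV, Measure.smul_apply, smul_eq_mul]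
  have hfin : (toR ⁻¹' (V : Set (Fin m → ℝ))).Finite := Set.toFinite _
  rw [Measure.count_apply_finite _ hfin]
  have hset : hfin.toFinset = Finset.univ.filter fun bl : Fin m → Bool => toR bl ∈ V := by
    ext bl; simp
  rw [hset, mul_comm]
  gcongr
  exact_mod_cast Nat.cast_le.mpr (card_bool_mem_le V)

end bern




abbrev Idx (m : ℕ) : Type := {q : Fin m × Fin m // q.1 < q.2}

def matOf (m : ℕ) (x : Idx m → ℝ) : Matrix (Fin m) (Fin m) ℝ :=
  Matrix.of fun i j =>
    if h : i < j then x ⟨(i, j), h⟩ else if h' : j < i then x ⟨(j, i), h'⟩ else 0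

lemma matOf_isSymm (m : ℕ) (x : Idx m → ℝ) : (matOf m x).IsSymm := by
  rw [Matrix.IsSymm]
  ext i j
  rcases lt_trichotomy i j with h | h | h
  · simp [matOf, h, h.asymm]
  · simp [matOf, h]
  · simp [matOf, h, h.asymm]

lemma matOf_diag (m : ℕ) (x : Idx m → ℝ) (i : Fin m) : matOf m x i i = 0 := by
  simp [matOf]

lemma measurable_matOf (m : ℕ) (i j : Fin m) :
    Measurable fun x : Idx m → ℝ => matOf m x i j := by
  unfold matOf
  rcases lt_trichotomy i j with h | h | h
  · simp only [Matrix.of_apply, dif_pos h]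
    exact measurable_pi_apply _
  · subst h
    simp only [Matrix.of_apply]
    simp only [dif_neg (lt_irrefl i)]
    exact measurable_const
  · simp only [Matrix.of_apply, dif_neg (asymm h), dif_pos h]
    exact measurable_pi_apply _

variable {Ω : Type*} [MeasureSpace Ω] {m : ℕ} {p : ℝ}

lemma map_entries {G : Ω → Matrix (Fin m) (Fin m) ℝ} (hG : IsERMatrix p G) :
    Measure.map (fun ω => fun q : Idx m => G ω q.1.1 q.1.2) volume =
      Measure.pi fun _ : Idx m => bernoulliLaw p := by
  obtain ⟨hsym, hdiag, hmeas, hind, hlaw⟩ := hG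
  refine (Measure.pi_eq fun s hs => ?_).symm
  rw [Measure.map_apply (measurable_pi_lambda _ fun q => hmeas q.1.1 q.1.2)
    (MeasurableSet.univ_pi hs)]
  have hpre : (fun ω (q : Idx m) => G ω q.1.1 q.1.2) ⁻¹' Set.pi Set.univ s =
      ⋂ q ∈ (Finset.univ : Finset (Idx m)), (fun ω => G ω q.1.1 q.1.2) ⁻¹' s q := by
    ext ω; simp [Set.mem_pi]
  rw [hpre, hind.measure_inter_preimage_eq_mul Finset.univ fun q _ => hs q]
  refine Finset.prod_congr rfl fun q _ => ?_
  rw [← hlaw q, Measure.map_apply (hmeas q.1.1 q.1.2) (hs q)]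

lemma matOf_entries (G : Ω → Matrix (Fin m) (Fin m) ℝ) (hsym : ∀ ω, (G ω).IsSymm)
    (hdiag : ∀ ω i, G ω i i = 0) (ω : Ω) :
    G ω = matOf m (fun q => G ω q.1.1 q.1.2) := by
  ext i j
  rcases lt_trichotomy i j with h | h | h
  · simp [matOf, h, h.asymm]
  · subst h; simp [matOf, hdiag ω i]
  · simp only [matOf, Matrix.of_apply, dif_neg (asymm h), dif_pos h]
    exact ((hsym ω).apply i j).symm

lemma vol_rank_eq {G : Ω → Matrix (Fin m) (Fin m) ℝ} (hG : IsERMatrix p G) (k : ℕ) :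
    volume {ω | (G ω).rank = k} =
      (Measure.pi fun _ : Idx m => bernoulliLaw p) {x | (matOf m x).rank = k} := by
  have hset : {ω | (G ω).rank = k} =
      (fun ω (q : Idx m) => G ω q.1.1 q.1.2) ⁻¹' {x | (matOf m x).rank = k} := by
    ext ω
    simp only [Set.mem_setOf_eq, Set.mem_preimage]
    rw [← matOf_entries G hG.1 hG.2.1 ω]
  have hms : MeasurableSet {x : Idx m → ℝ | (matOf m x).rank = k} := by
    have := measurable_rank (matOf m) (measurable_matOf m)
    exact this (measurableSet_singleton k)
  rw [hset, ← Measure.map_apply (measurable_pi_lambda _ fun q => hG.2.2.1 q.1.1 q.1.2) hms,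
    map_entries hG]

def emb (h : n ≤ N) (q : Idx n) : Idx N :=
  ⟨(Fin.castLE h q.1.1, Fin.castLE h q.1.2), q.2⟩

def restr (h : n ≤ N) (x : Idx N → ℝ) : Idx n → ℝ := fun q => x (emb h q)

def blkEquiv (h : n ≤ N) : Idx n ≃ {q : Idx N // (q.1.2 : ℕ) < n} where
  toFun q := ⟨emb h q, q.1.2.isLt⟩
  invFun r := ⟨(⟨r.1.1.1.1, lt_trans r.1.2 r.2⟩, ⟨r.1.1.2.1, r.2⟩), r.1.2⟩
  left_inv q := rfl
  right_inv r := rfl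

lemma measurable_restr (h : n ≤ N) : Measurable (restr h) :=
  measurable_pi_lambda _ fun q => measurable_pi_apply _

lemma map_restr (h : n ≤ N) :
    (Measure.pi fun _ : Idx N => bernoulliLaw (1 / 2)).map (restr h) =
      Measure.pi fun _ : Idx n => bernoulliLaw (1 / 2) := by
  classical
  set p : Idx N → Prop := fun q => (q.1.2 : ℕ) < n with hp
  set e := MeasurableEquiv.piEquivPiSubtypeProd (fun _ : Idx N => ℝ) p with he
  have hmp := measurePreserving_piEquivPiSubtypeProd
    (fun _ : Idx N => bernoulliLaw (1 / 2)) p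
  set g : ({q : Idx N // p q} → ℝ) → (Idx n → ℝ) :=
    fun a q => a (blkEquiv h q) with hg
  have hgm : Measurable g := measurable_pi_lambda _ fun q => measurable_pi_apply _
  have hcomp : restr h = g ∘ Prod.fst ∘ ⇑e := rfl
  rw [hcomp, ← Function.comp_assoc, ← Measure.map_map (hgm.comp measurable_fst) e.measurable,
    hmp.map_eq, ← Measure.map_map hgm measurable_fst, Measure.map_fst_prod]
  simp only [measure_univ, one_smul]
  have hps := (measurePreserving_piCongrLeft
    (fun _ : {q : Idx N // p q} => bernoulliLaw (1 / 2)) (blkEquiv h)).symm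
  have hcoe : g = ⇑(MeasurableEquiv.piCongrLeft (fun _ : {q : Idx N // p q} => ℝ)
      (blkEquiv h)).symm := by
    funext a q
    rfl
  rw [hcoe, hps.map_eq]


section blkM

def blkM (N m : ℕ) (h : m ≤ N) (x : Idx N → ℝ) : Matrix (Fin m) (Fin m) ℝ :=
  (matOf N x).submatrix (Fin.castLE h) (Fin.castLE h)

lemma blkM_isSymm (N m : ℕ) (h : m ≤ N) (x : Idx N → ℝ) : (blkM N m h x).IsSymm := by
  unfold blkM
  rw [Matrix.IsSymm, Matrix.transpose_submatrix, (matOf_isSymm N x)]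

lemma measurable_blkM (N m : ℕ) (h : m ≤ N) (i j : Fin m) :
    Measurable fun x => blkM N m h x i j := by
  unfold blkM
  simp only [Matrix.submatrix_apply]
  exact measurable_matOf N _ _

lemma blkM_full (N : ℕ) (x : Idx N → ℝ) : blkM N N le_rfl x = matOf N x := by
  have hid : (Fin.castLE (le_refl N)) = id := by
    funext i; exact Fin.ext rfl
  rw [blkM, hid, Matrix.submatrix_id_id]

lemma subA_blkM (N m : ℕ) (h : m + 1 ≤ N) (x : Idx N → ℝ) :
    subA (blkM N (m + 1) h x) = blkM N m (le_trans (Nat.le_succ m) h) x := by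
  unfold subA blkM
  rw [Matrix.submatrix_submatrix]
  congr 1 <;> · funext i; exact Fin.ext rfl

lemma matOf_restrict {n N : ℕ} (h : n ≤ N) (x : Idx N → ℝ) :
    matOf n (restr h x) = blkM N n h x := by
  ext i j
  rcases lt_trichotomy i j with h' | h' | h'
  · have hc : Fin.castLE h i < Fin.castLE h j := h'
    simp only [blkM, Matrix.submatrix_apply, matOf, Matrix.of_apply, dif_pos h', dif_pos hc]
    rfl
  · subst h'
    simp only [blkM, Matrix.submatrix_apply, matOf, Matrix.of_apply,
      dif_neg (lt_irrefl i), dif_neg (lt_irrefl (Fin.castLE h i))]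
  · have hc : Fin.castLE h j < Fin.castLE h i := h'
    simp only [blkM, Matrix.submatrix_apply, matOf, Matrix.of_apply, dif_neg (asymm h'),
      dif_pos h', dif_neg (asymm hc), dif_pos hc]
    rfl

lemma measurableSet_eq_nat {α : Type*} [MeasurableSpace α] {f g : α → ℕ}
    (hf : Measurable f) (hg : Measurable g) : MeasurableSet {x | f x = g x} := by
  have h : {x | f x = g x} = ⋃ r : ℕ, f ⁻¹' {r} ∩ g ⁻¹' {r} := by
    ext x
    simp only [Set.mem_setOf_eq, Set.mem_iUnion, Set.mem_inter_iff, Set.mem_preimage,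
      Set.mem_singleton_iff]
    exact ⟨fun h => ⟨f x, rfl, h.symm⟩, fun ⟨r, h1, h2⟩ => h1.trans h2.symm⟩
  rw [h]
  exact MeasurableSet.iUnion fun r =>
    (hf (measurableSet_singleton r)).inter (hg (measurableSet_singleton r))

def colEquiv (N mj : ℕ) (h : mj < N) : Fin mj ≃ {q : Idx N // ¬ ((q.1.2 : ℕ) ≠ mj)} where
  toFun i := ⟨⟨(⟨i.1, lt_trans i.2 h⟩, ⟨mj, h⟩), i.2⟩, not_not_intro rfl⟩
  invFun r := ⟨r.1.1.1.1, by
    have h1 : (r.1.1.1.1 : ℕ) < r.1.1.2.1 := r.1.2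
    have h2 : (r.1.1.2.1 : ℕ) = mj := congrArg Fin.val (Fin.ext (not_not.mp r.2) : r.1.1.2 = ⟨mj, h⟩)
    omega⟩
  left_inv i := rfl
  right_inv r := by
    apply Subtype.ext
    apply Subtype.ext
    exact Prod.ext rfl (Fin.ext (not_not.mp r.2)).symm

lemma sum_bound (k c n : ℕ) (hn : n = k + c + 1) :
    ∑ j ∈ Finset.range c, (2 : ENNReal) ^ (k + 2 * j) * ((2 : ENNReal) ^ (n + j))⁻¹ ≤ 2⁻¹ := by
  have h2 : (2 : ENNReal) ≠ 0 := two_ne_zero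
  have h2t : (2 : ENNReal) ≠ ⊤ := ENNReal.ofNat_ne_top
  have hterm : ∀ j ∈ Finset.range c,
      (2 : ENNReal) ^ (k + 2 * j) * ((2 : ENNReal) ^ (n + j))⁻¹ =
        (fun i => (2 : ENNReal)⁻¹ ^ i * (2⁻¹) ^ 2) (c - 1 - j) := by
    intro j hj
    rw [Finset.mem_range] at hj
    have h1 : n + j = (k + 2 * j) + ((c - 1 - j) + 2) := by omega
    rw [h1, pow_add (2 : ENNReal) (k + 2 * j) (c - 1 - j + 2),
      ENNReal.mul_inv (Or.inl (pow_ne_zero _ h2)) (Or.inl (ENNReal.pow_ne_top h2t)),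
      ← mul_assoc, ENNReal.mul_inv_cancel (pow_ne_zero _ h2) (ENNReal.pow_ne_top h2t), one_mul,
      pow_add (2 : ENNReal) (c - 1 - j) 2,
      ENNReal.mul_inv (Or.inl (pow_ne_zero _ h2)) (Or.inl (ENNReal.pow_ne_top h2t)),
      ]
    simp [ENNReal.inv_pow]
  rw [Finset.sum_congr rfl hterm,
    Finset.sum_range_reflect (fun i => (2 : ENNReal)⁻¹ ^ i * (2 : ENNReal)⁻¹ ^ 2) c]
  have hgeo : ∑ j ∈ Finset.range c, (2 : ENNReal)⁻¹ ^ j ≤ 2 := by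
    refine le_trans (ENNReal.sum_le_tsum _) ?_
    rw [ENNReal.tsum_geometric, ENNReal.one_sub_inv_two, inv_inv]
  calc ∑ j ∈ Finset.range c, (2 : ENNReal)⁻¹ ^ j * 2⁻¹ ^ 2
      = (∑ j ∈ Finset.range c, (2 : ENNReal)⁻¹ ^ j) * 2⁻¹ ^ 2 := by
        rw [Finset.sum_mul]
    _ ≤ 2 * 2⁻¹ ^ 2 := by gcongr
    _ = 2⁻¹ := by
        rw [pow_two, ← mul_assoc, ENNReal.mul_inv_cancel h2 h2t, one_mul]

end blkM

lemma canon_bound (k c n : ℕ) (hn : n = k + c + 1) :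
    (Measure.pi fun _ : Idx n => bernoulliLaw (1 / 2)) {x | (matOf n x).rank = k} ≤
      2 * (Measure.pi fun _ : Idx (n + c) => bernoulliLaw (1 / 2))
        {x | (matOf (n + c) x).rank = k + 2 * c} := by
  classical
  set N := n + c with hNdef
  have hnN : n ≤ N := Nat.le_add_right n c
  set μ : Measure (Idx N → ℝ) := Measure.pi fun _ => bernoulliLaw (1 / 2) with hμ
  have hrankblk : ∀ (m : ℕ) (h : m ≤ N), Measurable fun x => (blkM N m h x).rank :=
    fun m h => measurable_rank _ (measurable_blkM N m h)
  set E : Set (Idx N → ℝ) := {x | (blkM N n hnN x).rank = k} with hE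
  have hEm : MeasurableSet E := hrankblk n hnN (measurableSet_singleton k)
  set Tgt : Set (Idx N → ℝ) := {x | (matOf N x).rank = k + 2 * c} with hTgt
  -- Step 1 : transfer the probability to the big space
  have h1 : (Measure.pi fun _ : Idx n => bernoulliLaw (1 / 2)) {x | (matOf n x).rank = k}
      = μ E := by
    have hms : MeasurableSet {x : Idx n → ℝ | (matOf n x).rank = k} :=
      (measurable_rank (matOf n) (measurable_matOf n)) (measurableSet_singleton k)
    rw [← map_restr hnN, Measure.map_apply (measurable_restr hnN) hms]
    have hpre : restr hnN ⁻¹' {x : Idx n → ℝ | (matOf n x).rank = k} = E := by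
      ext x
      simp only [Set.mem_preimage, Set.mem_setOf_eq, hE, matOf_restrict hnN x]
    rw [hpre]
  rw [h1]
  have hcN : ∀ {j : ℕ}, j < c → n + j ≤ N := fun {j} hj => by omega
  have hcN1 : ∀ {j : ℕ}, j < c → n + j + 1 ≤ N := fun {j} hj => by omega
  set bad : ∀ j : ℕ, j < c → Set (Idx N → ℝ) := fun j hj =>
    {x | (blkM N (n + j) (hcN hj) x).rank = k + 2 * j ∧
      subv (blkM N (n + j + 1) (hcN1 hj) x) ∈ colSpan (blkM N (n + j) (hcN hj) x)} with hbad
  -- deterministic part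
  have hdet : E ∩ (⋂ (j : ℕ) (hj : j < c), (bad j hj)ᶜ) ⊆ Tgt := by
    rintro x ⟨hxE, hxg⟩
    have hstep : ∀ j, ∀ hj : j ≤ c, (blkM N (n + j) (by omega) x).rank = k + 2 * j := by
      intro j
      induction j with
      | zero => intro _; exact hxE
      | succ j ih =>
        intro hj
        have hjc : j < c := by omega
        have hA : (blkM N (n + j) (hcN hjc) x).rank = k + 2 * j := ih (by omega)
        have hnb : x ∉ bad j hjc := by
          have h0 := Set.mem_iInter.mp hxg j
          exact Set.mem_iInter.mp h0 hjc
        have hv : subv (blkM N (n + j + 1) (hcN1 hjc) x) ∉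
            colSpan (blkM N (n + j) (hcN hjc) x) := fun hv => hnb ⟨hA, hv⟩
        have hr := rank_ext_eq (blkM N (n + j + 1) (hcN1 hjc) x)
          (blkM_isSymm N (n + j + 1) (hcN1 hjc) x)
          (by rwa [subA_blkM])
        rw [subA_blkM, hA] at hr
        have : k + 2 * j + 2 = k + 2 * (j + 1) := by omega
        rw [← this]
        exact hr
    have hfin := hstep c le_rfl
    have hfull : blkM N (n + c) (by omega) x = matOf N x := blkM_full N x
    rw [hfull] at hfin
    exact hfin
  -- probabilistic part
  have hkey : ∀ j, ∀ hj : j < c, μ (E ∩ bad j hj) ≤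
      2 ^ (k + 2 * j) * ((2 : ENNReal) ^ (n + j))⁻¹ * μ E := by
    intro j hj
    set p : Idx N → Prop := fun q => (q.1.2 : ℕ) ≠ n + j with hp
    set e := MeasurableEquiv.piEquivPiSubtypeProd (fun _ : Idx N => ℝ) p with he
    set π₁ : Measure ({q : Idx N // p q} → ℝ) := Measure.pi fun _ => bernoulliLaw (1 / 2)
      with hπ₁
    set π₂ : Measure ({q : Idx N // ¬p q} → ℝ) := Measure.pi fun _ => bernoulliLaw (1 / 2)
      with hπ₂
    have hmp := measurePreserving_piEquivPiSubtypeProd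
      (fun _ : Idx N => bernoulliLaw (1 / 2)) p
    have hkeyS : ∀ S : Set (Idx N → ℝ), MeasurableSet S →
        μ S = (π₁.prod π₂) (⇑e.symm ⁻¹' S) := by
      intro S hS
      rw [← hmp.map_eq, Measure.map_apply e.measurable (e.symm.measurable hS)]
      congr 1
      ext x
      simp
    have hmerge : ∀ (a : {q : Idx N // p q} → ℝ) (b : {q : Idx N // ¬p q} → ℝ) (q : Idx N),
        e.symm (a, b) q = if h : p q then a ⟨q, h⟩ else b ⟨q, h⟩ := fun a b q => rfl
    set b₀ : {q : Idx N // ¬p q} → ℝ := fun _ => 0 with hb₀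
    have hblk_merge : ∀ (m : ℕ) (hm : m ≤ n + j) (hmN : m ≤ N) a b,
        blkM N m hmN (e.symm (a, b)) = blkM N m hmN (e.symm (a, b₀)) := by
      intro m hm hmN a b
      have hcoord : ∀ (u v : Fin m) (huv : Fin.castLE hmN u < Fin.castLE hmN v),
          e.symm (a, b) ⟨(Fin.castLE hmN u, Fin.castLE hmN v), huv⟩ =
          e.symm (a, b₀) ⟨(Fin.castLE hmN u, Fin.castLE hmN v), huv⟩ := by
        intro u v huv
        rw [hmerge, hmerge]
        have hpq : p ⟨(Fin.castLE hmN u, Fin.castLE hmN v), huv⟩ := by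
          show ((Fin.castLE hmN v : Fin N) : ℕ) ≠ n + j
          have hv2 : (v : ℕ) < m := v.isLt
          simp only [Fin.coe_castLE]
          omega
        rw [dif_pos hpq, dif_pos hpq]
      ext i i'
      unfold blkM matOf
      simp only [Matrix.submatrix_apply, Matrix.of_apply]
      by_cases h1 : Fin.castLE hmN i < Fin.castLE hmN i'
      · rw [dif_pos h1, dif_pos h1, hcoord _ _ h1]
      · rw [dif_neg h1, dif_neg h1]
        by_cases h2 : Fin.castLE hmN i' < Fin.castLE hmN i
        · rw [dif_pos h2, dif_pos h2, hcoord _ _ h2]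
        · rw [dif_neg h2, dif_neg h2]
    set eqv2 := colEquiv N (n + j) (by omega) with heqv2
    set vec : ({q : Idx N // ¬p q} → ℝ) → (Fin (n + j) → ℝ) := fun b i => b (eqv2 i) with hvec
    have hsubv : ∀ a b, subv (blkM N (n + j + 1) (hcN1 hj) (e.symm (a, b))) = vec b := by
      intro a b
      funext i
      show blkM N (n + j + 1) (hcN1 hj) (e.symm (a, b)) (Fin.castSucc i) (Fin.last (n + j)) =
        b (eqv2 i)
      unfold blkM matOf
      simp only [Matrix.submatrix_apply, Matrix.of_apply]
      have hlt : Fin.castLE (hcN1 hj) (Fin.castSucc i) <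
          Fin.castLE (hcN1 hj) (Fin.last (n + j)) := i.isLt
      rw [dif_pos hlt, hmerge]
      have hnp : ¬ p ⟨(Fin.castLE (hcN1 hj) (Fin.castSucc i),
          Fin.castLE (hcN1 hj) (Fin.last (n + j))), hlt⟩ := not_not_intro rfl
      rw [dif_neg hnp]
      try rfl
      try (congr 1; apply Subtype.ext; apply Subtype.ext;
           exact Prod.ext (Fin.ext rfl) (Fin.ext rfl))
    set mg : ({q : Idx N // p q} → ℝ) → (Idx N → ℝ) := fun a => e.symm (a, b₀) with hmg
    have hmgm : Measurable mg :=
      e.symm.measurable.comp (measurable_id.prodMk measurable_const)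
    set D : Set ({q : Idx N // p q} → ℝ) :=
      {a | (blkM N n hnN (mg a)).rank = k ∧
        (blkM N (n + j) (hcN hj) (mg a)).rank = k + 2 * j} with hD
    have hDm : MeasurableSet D := by
      refine MeasurableSet.inter ?_ ?_
      · exact (measurable_rank _ fun i i' => (measurable_blkM N n hnN i i').comp hmgm)
          (measurableSet_singleton k)
      · exact (measurable_rank _ fun i i' => (measurable_blkM N (n + j) (hcN hj) i i').comp hmgm)
          (measurableSet_singleton (k + 2 * j))
    have hbadm : MeasurableSet (bad j hj) := by
      have hiff : bad j hj = {x | (blkM N (n + j) (hcN hj) x).rank = k + 2 * j} ∩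
          {x | ((blkM N (n + j + 1) (hcN1 hj) x).submatrix Fin.castSucc id).rank =
            (blkM N (n + j) (hcN hj) x).rank} := by
        ext x
        simp only [hbad, Set.mem_inter_iff, Set.mem_setOf_eq]
        have h := mem_colSpan_iff_rank (blkM N (n + j + 1) (hcN1 hj) x)
        rw [subA_blkM] at h
        rw [h]
      rw [hiff]
      refine MeasurableSet.inter (hrankblk _ _ (measurableSet_singleton _)) ?_
      exact measurableSet_eq_nat
        (measurable_rank _ fun i i' => by
          simp only [Matrix.submatrix_apply]
          exact measurable_blkM N (n + j + 1) (hcN1 hj) _ _)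
        (hrankblk _ _)
    have hEbadm : MeasurableSet (E ∩ bad j hj) := hEm.inter hbadm
    set T := ⇑e.symm ⁻¹' (E ∩ bad j hj) with hT
    have hTm : MeasurableSet T := e.symm.measurable hEbadm
    have hTdesc : T = {z : ({q : Idx N // p q} → ℝ) × ({q : Idx N // ¬p q} → ℝ) |
        z.1 ∈ D ∧ vec z.2 ∈ colSpan (blkM N (n + j) (hcN hj) (mg z.1))} := by
      ext ⟨a, b⟩
      simp only [hT, Set.mem_preimage, Set.mem_inter_iff, Set.mem_setOf_eq, hE, hbad, hD]
      have h1 : blkM N n hnN (e.symm (a, b)) = blkM N n hnN (mg a) :=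
        hblk_merge n (by omega) hnN a b
      have h2 : blkM N (n + j) (hcN hj) (e.symm (a, b)) = blkM N (n + j) (hcN hj) (mg a) :=
        hblk_merge (n + j) le_rfl (hcN hj) a b
      rw [h1, h2, hsubv a b]
      tauto
    rw [hkeyS _ hEbadm, ← hT, Measure.prod_apply hTm]
    have hsl : ∀ a, π₂ (Prod.mk a ⁻¹' T) ≤
        D.indicator (fun _ => 2 ^ (k + 2 * j) * ((2 : ENNReal) ^ (n + j))⁻¹) a := by
      intro a
      by_cases ha : a ∈ D
      · rw [Set.indicator_of_mem ha]
        have hset : Prod.mk a ⁻¹' T =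
            vec ⁻¹' (colSpan (blkM N (n + j) (hcN hj) (mg a)) : Set (Fin (n + j) → ℝ)) := by
          ext b
          simp only [Set.mem_preimage, hTdesc, Set.mem_setOf_eq, SetLike.mem_coe]
          exact and_iff_right ha
        rw [hset]
        have hvmp := (measurePreserving_piCongrLeft
          (fun _ : {q : Idx N // ¬p q} => bernoulliLaw (1 / 2)) eqv2).symm
        have hvcoe : vec = ⇑(MeasurableEquiv.piCongrLeft
            (fun _ : {q : Idx N // ¬p q} => ℝ) eqv2).symm := by
          funext b i
          rfl
        have hVms : MeasurableSet
            (colSpan (blkM N (n + j) (hcN hj) (mg a)) : Set (Fin (n + j) → ℝ)) :=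
          (Submodule.closed_of_finiteDimensional _).measurableSet
        rw [hvcoe, hvmp.measure_preimage hVms.nullMeasurableSet]
        have hb := pi_bern_subspace_le (n + j) (colSpan (blkM N (n + j) (hcN hj) (mg a)))
        rw [← rank_eq_colSpan, ha.2] at hb
        exact hb
      · rw [Set.indicator_of_notMem ha]
        have hempty : Prod.mk a ⁻¹' T = ∅ := by
          ext b
          simp only [Set.mem_preimage, hTdesc, Set.mem_setOf_eq, Set.mem_empty_iff_false,
            iff_false]
          exact fun hc => ha hc.1
        simp [hempty]
    calc ∫⁻ a, π₂ (Prod.mk a ⁻¹' T) ∂π₁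
        ≤ ∫⁻ a, D.indicator (fun _ => 2 ^ (k + 2 * j) * ((2 : ENNReal) ^ (n + j))⁻¹) a ∂π₁ :=
          lintegral_mono hsl
      _ = 2 ^ (k + 2 * j) * ((2 : ENNReal) ^ (n + j))⁻¹ * π₁ D := by
          rw [lintegral_indicator_const hDm]
      _ ≤ 2 ^ (k + 2 * j) * ((2 : ENNReal) ^ (n + j))⁻¹ * μ E := by
          gcongr
          have hiset : MeasurableSet
              (E ∩ {x | (blkM N (n + j) (hcN hj) x).rank = k + 2 * j}) :=
            hEm.inter (hrankblk _ _ (measurableSet_singleton _))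
          have hDE : π₁ D = μ (E ∩ {x | (blkM N (n + j) (hcN hj) x).rank = k + 2 * j}) := by
            rw [hkeyS _ hiset]
            have hpre : ⇑e.symm ⁻¹' (E ∩ {x | (blkM N (n + j) (hcN hj) x).rank = k + 2 * j}) =
                D ×ˢ (Set.univ : Set ({q : Idx N // ¬p q} → ℝ)) := by
              ext ⟨a, b⟩
              simp only [Set.mem_preimage, Set.mem_inter_iff, Set.mem_setOf_eq, hE, hD,
                Set.mem_prod, Set.mem_univ, and_true]
              rw [hblk_merge n (by omega) hnN a b, hblk_merge (n + j) le_rfl (hcN hj) a b]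
            rw [hpre, Measure.prod_prod, measure_univ, mul_one]
          rw [hDE]
          exact measure_mono Set.inter_subset_left
  -- assemble
  set badS : ℕ → Set (Idx N → ℝ) := fun j => ⋃ (hj : j < c), E ∩ bad j hj with hbadS
  have hsplit : E ⊆ (E ∩ ⋂ (j : ℕ) (hj : j < c), (bad j hj)ᶜ) ∪ ⋃ j ∈ Finset.range c, badS j := by
    intro x hx
    by_cases hb : ∀ j, ∀ hj : j < c, x ∉ bad j hj
    · exact Or.inl ⟨hx, Set.mem_iInter.mpr fun j => Set.mem_iInter.mpr fun hj => hb j hj⟩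
    · push_neg at hb
      obtain ⟨j, hj, hxb⟩ := hb
      refine Or.inr (Set.mem_biUnion (Finset.mem_range.mpr hj) ?_)
      exact Set.mem_iUnion.mpr ⟨hj, hx, hxb⟩
  have hμE : μ E ≤ μ Tgt + 2⁻¹ * μ E := by
    calc μ E ≤ μ ((E ∩ ⋂ (j : ℕ) (hj : j < c), (bad j hj)ᶜ) ∪ ⋃ j ∈ Finset.range c, badS j) :=
          measure_mono hsplit
      _ ≤ μ (E ∩ ⋂ (j : ℕ) (hj : j < c), (bad j hj)ᶜ) + μ (⋃ j ∈ Finset.range c, badS j) :=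
          measure_union_le _ _
      _ ≤ μ Tgt + ∑ j ∈ Finset.range c, μ (badS j) := by
          gcongr
          exact measure_biUnion_finset_le _ _
      _ ≤ μ Tgt + ∑ j ∈ Finset.range c,
            2 ^ (k + 2 * j) * ((2 : ENNReal) ^ (n + j))⁻¹ * μ E := by
          gcongr with j hjr
          rw [Finset.mem_range] at hjr
          have : badS j = E ∩ bad j hjr := by
            rw [hbadS]
            exact iSup_pos hjr
          rw [this]
          exact hkey j hjr
      _ ≤ μ Tgt + 2⁻¹ * μ E := by
          gcongr ?_ + ?_
          · exact le_rfl
          · rw [← Finset.sum_mul]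
            exact mul_le_mul_left (sum_bound k c n hn) _
  have hfinE : 2⁻¹ * μ E ≠ ⊤ := by
    refine ENNReal.mul_ne_top (by simp) (measure_ne_top μ E)
  have h3 : 2⁻¹ * μ E ≤ μ Tgt := by
    have h2 : 2⁻¹ * μ E + 2⁻¹ * μ E = μ E := by
      rw [← add_mul, ENNReal.inv_two_add_inv_two, one_mul]
    have h4 : 2⁻¹ * μ E + 2⁻¹ * μ E ≤ μ Tgt + 2⁻¹ * μ E := by rw [h2]; exact hμE
    exact ENNReal.le_of_add_le_add_right hfinE h4
  calc μ E = 2 * (2⁻¹ * μ E) := by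
        rw [← mul_assoc, ENNReal.mul_inv_cancel two_ne_zero ENNReal.ofNat_ne_top, one_mul]
    _ ≤ 2 * μ Tgt := by gcongr

end ERRank

/-- **Lemma 6.2.** For the Erdős–Rényi model with `p = 1/2`, for all
`0 ≤ k ≤ n-1`,
`P(Rank G_n = k) ≤ 2 P(Rank G_{2n-k-1} = 2n-k-2)`. -/
theorem rank_comparison
    (Ω : ℕ → Type) [∀ m, MeasureSpace (Ω m)]
    [∀ m, IsProbabilityMeasure (volume : Measure (Ω m))]
    (G : ∀ m, Ω m → Matrix (Fin m) (Fin m) ℝ)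
    (hG : ∀ m, IsERMatrix (1 / 2 : ℝ) (G m))
    (n k : ℕ) (hk : k ≤ n - 1) :
    volume {ω | (G n ω).rank = k} ≤
      2 * volume {ω | (G (2 * n - k - 1) ω).rank = 2 * n - k - 2} := by
  rcases Nat.eq_zero_or_pos n with rfl | hpos
  · have hk0 : k = 0 := Nat.le_zero.mp hk
    subst hk0
    exact le_mul_of_one_le_left (by simp) one_le_two
  · obtain ⟨c, hc⟩ : ∃ c, n = k + c + 1 := ⟨n - 1 - k, by omega⟩
    have hN : 2 * n - k - 1 = n + c := by omega
    have hr : 2 * n - k - 2 = k + 2 * c := by omega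
    rw [ERRank.vol_rank_eq (hG n) k, hN, hr, ERRank.vol_rank_eq (hG (n + c)) (k + 2 * c)]
    exact ERRank.canon_bound k c n hc
end
end
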